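/- arXiv:2207.11208 — 4 statements merged into one kernel-verified Lean document; each statement's English description precedes it below -/
import Mathlib

section
/- Let Ω be a real symmetric d×d matrix with eigenvalues μ₁ ≥ … ≥ μ_d and orthonormal eigenvectors u₁,…,u_d, and let u be a unit vector. Fix k, and suppose for every index j > k with μ_j ≤ μ_k − ε·γ (for γ ≥ 1) we have Σ_{s: μ_s ≤ μ_k − εγ} ⟨u,u_s⟩² ≤ 1/γ². Then uᵀΩu ≥ μ_k − 2ε. -/
open Matrix

/-- Layer-cake / Abel summation bound. -/
lemma abel_tail_bound {d : ℕ} (g c : Fin d → ℝ) (hc : ∀ j, 0 ≤ c j) (ε : ℝ) (hε : 0 < ε)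
    (H : ∀ t : ℝ, ε ≤ t → ∑ j ∈ Finset.univ.filter (fun j => t ≤ g j), c j ≤ ε ^ 2 / t ^ 2) :
    ∀ n : ℕ, ∀ b : ℝ, ε ≤ b → (Finset.univ.filter (fun j => b < g j)).card ≤ n →
      ∑ j ∈ Finset.univ.filter (fun j => b < g j), (g j - b) * c j ≤ ε ^ 2 / b := by
  intro n
  induction n with
  | zero =>
    intro b hb hcard
    have hbpos : 0 < b := lt_of_lt_of_le hε hb
    have hempty : (Finset.univ.filter (fun j => b < g j)) = ∅ :=
      Finset.card_eq_zero.mp (Nat.le_zero.mp hcard)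
    rw [hempty, Finset.sum_empty]
    positivity
  | succ m ih =>
    intro b hb hcard
    have hbpos : 0 < b := lt_of_lt_of_le hε hb
    set S := Finset.univ.filter (fun j : Fin d => b < g j) with hS
    rcases S.eq_empty_or_nonempty with hSe | hSne
    · rw [hSe, Finset.sum_empty]; positivity
    obtain ⟨j₀, hj₀S, hj₀min⟩ := Finset.exists_min_image S g hSne
    set b' := g j₀ with hb'
    have hbb' : b < b' := (Finset.mem_filter.mp hj₀S).2
    have hb'pos : 0 < b' := lt_trans hbpos hbb'
    have hεb' : ε ≤ b' := le_trans hb hbb'.le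
    -- S = {j : b' ≤ g j}
    have hSeq : S = Finset.univ.filter (fun j : Fin d => b' ≤ g j) := by
      ext j
      simp only [hS, Finset.mem_filter, Finset.mem_univ, true_and]
      constructor
      · intro hj; exact hj₀min j (Finset.mem_filter.mpr ⟨Finset.mem_univ j, hj⟩)
      · intro hj; exact lt_of_lt_of_le hbb' hj
    set S' := Finset.univ.filter (fun j : Fin d => b' < g j) with hS'
    have hS'sub : S' ⊆ S := by
      intro j hj
      rw [hSeq]
      exact Finset.mem_filter.mpr ⟨Finset.mem_univ j, (Finset.mem_filter.mp hj).2.le⟩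
    have hj₀notS' : j₀ ∉ S' := by
      simp [hS', lt_irrefl]
      exact le_rfl
    have hcard' : S'.card ≤ m := by
      have h1 : S'.card < S.card := Finset.card_lt_card
        (Finset.ssubset_iff_of_subset hS'sub |>.mpr ⟨j₀, hj₀S, hj₀notS'⟩)
      omega
    -- split the sum
    have hsplit : ∑ j ∈ S, (g j - b) * c j
        = ∑ j ∈ S, (g j - b') * c j + (b' - b) * ∑ j ∈ S, c j := by
      rw [Finset.mul_sum, ← Finset.sum_add_distrib]
      exact Finset.sum_congr rfl (fun j _ => by ring)
    have hsum1 : ∑ j ∈ S, (g j - b') * c j = ∑ j ∈ S', (g j - b') * c j := by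
      symm
      apply Finset.sum_subset hS'sub
      intro j hjS hjS'
      have h1 : b' ≤ g j := by rw [hSeq] at hjS; exact (Finset.mem_filter.mp hjS).2
      have h2 : ¬ b' < g j := fun h =>
        hjS' (Finset.mem_filter.mpr ⟨Finset.mem_univ j, h⟩)
      rw [le_antisymm (not_lt.mp h2) h1]; ring
    have htail : ∑ j ∈ S, c j ≤ ε ^ 2 / b' ^ 2 := by
      rw [hSeq]; exact H b' hεb'
    have hih : ∑ j ∈ S', (g j - b') * c j ≤ ε ^ 2 / b' := ih b' hεb' hcard'
    have hfinal : ε ^ 2 / b' + (b' - b) * (ε ^ 2 / b' ^ 2) ≤ ε ^ 2 / b := by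
      rw [mul_div_assoc', div_add_div _ _ (by positivity) (by positivity),
        div_le_div_iff₀ (by positivity) (by positivity)]
      nlinarith [mul_nonneg (sq_nonneg ε) (sq_nonneg (b' - b)), sq_nonneg (b' - b)]
    calc ∑ j ∈ S, (g j - b) * c j
        = ∑ j ∈ S', (g j - b') * c j + (b' - b) * ∑ j ∈ S, c j := by rw [hsplit, hsum1]
      _ ≤ ε ^ 2 / b' + (b' - b) * (ε ^ 2 / b' ^ 2) :=
          add_le_add hih (mul_le_mul_of_nonneg_left htail (by linarith))
      _ ≤ ε ^ 2 / b := hfinal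

/-- If `Ω = Σ_j μ_j u_j u_jᵀ` with orthonormal eigenvectors `u_j` and decreasing
eigenvalues `μ`, `v` is a unit vector, and for every `γ ≥ 1` the squared overlap of `v`
with eigenvectors whose eigenvalues are at most `μ_k − εγ` is at most `1/γ²`,
then `vᵀ Ω v ≥ μ_k − 2ε`. -/
theorem stmt_6 {d : ℕ} (u : Fin d → (Fin d → ℝ)) (μ : Fin d → ℝ) (ε : ℝ) (hε : 0 < ε)
    (v : Fin d → ℝ) (k : Fin d)
    (hortho : ∀ i j, u i ⬝ᵥ u j = if i = j then 1 else 0)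
    (hmono : Antitone μ)
    (hunit : v ⬝ᵥ v = 1)
    (hoverlap : ∀ γ : ℝ, 1 ≤ γ →
      ∑ s ∈ Finset.univ.filter (fun s => μ s ≤ μ k - ε * γ), (v ⬝ᵥ u s) ^ 2 ≤ 1 / γ ^ 2) :
    μ k - 2 * ε ≤ v ⬝ᵥ ((∑ j : Fin d, μ j • Matrix.vecMulVec (u j) (u j)) *ᵥ v) := by
  set c : Fin d → ℝ := fun j => (v ⬝ᵥ u j) ^ 2 with hc
  have hcnn : ∀ j, 0 ≤ c j := fun j => sq_nonneg _
  -- the quadratic form equals ∑ μ j * c j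
  have hform : v ⬝ᵥ ((∑ j : Fin d, μ j • Matrix.vecMulVec (u j) (u j)) *ᵥ v)
      = ∑ j : Fin d, μ j * c j := by
    simp only [hc, mulVec, dotProduct, Matrix.sum_apply, Matrix.smul_apply, vecMulVec_apply,
      smul_eq_mul, pow_two, Finset.sum_mul, Finset.mul_sum]
    rw [Finset.sum_congr rfl fun x (_ : x ∈ Finset.univ) =>
      (Finset.sum_comm : ∑ x_1 : Fin d, ∑ i : Fin d, v x * (μ i * (u i x * u i x_1) * v x_1)
        = ∑ i : Fin d, ∑ x_1 : Fin d, v x * (μ i * (u i x * u i x_1) * v x_1))]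
    rw [Finset.sum_comm]
    exact Finset.sum_congr rfl fun i _ => Finset.sum_congr rfl fun x _ =>
      Finset.sum_congr rfl fun y _ => by ring
  -- total mass is 1
  have htotal : ∑ j : Fin d, c j = 1 := by
    set U : Matrix (Fin d) (Fin d) ℝ := Matrix.of u with hU
    have hUUt : U * Uᵀ = 1 := by
      ext i j
      rw [Matrix.mul_apply]
      simpa [hU, Matrix.one_apply, dotProduct] using hortho i j
    have hUtU : Uᵀ * U = 1 := mul_eq_one_comm.mp hUUt
    have key : ∑ j : Fin d, c j = (U *ᵥ v) ⬝ᵥ (U *ᵥ v) := by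
      simp only [hc, dotProduct, mulVec, hU, Matrix.of_apply, pow_two]
      apply Finset.sum_congr rfl
      intro j _
      congr 1 <;> exact Finset.sum_congr rfl (fun i _ => mul_comm _ _)
    rw [key, dotProduct_mulVec, ← Matrix.mulVec_transpose, Matrix.mulVec_mulVec, hUtU,
      Matrix.one_mulVec, dotProduct_comm, hunit]
  -- tail bound in the form used by abel_tail_bound
  set g : Fin d → ℝ := fun j => μ k - μ j with hg
  have Htail : ∀ t : ℝ, ε ≤ t →
      ∑ j ∈ Finset.univ.filter (fun j => t ≤ g j), c j ≤ ε ^ 2 / t ^ 2 := by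
    intro t ht
    have htpos : 0 < t := lt_of_lt_of_le hε ht
    have hγ : 1 ≤ t / ε := (one_le_div hε).mpr ht
    have h := hoverlap (t / ε) hγ
    have heq : (Finset.univ.filter (fun s => μ s ≤ μ k - ε * (t / ε)))
        = Finset.univ.filter (fun j => t ≤ g j) := by
      apply Finset.filter_congr
      intro j _
      simp only [hg, mul_div_cancel₀ _ hε.ne']
      constructor <;> intro <;> linarith
    rw [heq] at h
    calc ∑ j ∈ Finset.univ.filter (fun j => t ≤ g j), c j ≤ 1 / (t / ε) ^ 2 := h
      _ = ε ^ 2 / t ^ 2 := by rw [div_pow, one_div_div]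
  -- main inequality
  have habel := abel_tail_bound g c hcnn ε hε Htail
    (Finset.univ.filter (fun j : Fin d => ε < g j)).card ε le_rfl le_rfl
  have hεε : (ε:ℝ) ^ 2 / ε = ε := by field_simp [sq]
  rw [hεε] at habel
  have hdrop : ∑ j : Fin d, (g j - ε) * c j
      ≤ ∑ j ∈ Finset.univ.filter (fun j => ε < g j), (g j - ε) * c j := by
    rw [← Finset.sum_filter_add_sum_filter_not Finset.univ (fun j => ε < g j)
      (fun j => (g j - ε) * c j)]
    have h0 : ∑ j ∈ Finset.univ.filter (fun j => ¬ ε < g j), (g j - ε) * c j ≤ 0 := by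
      apply Finset.sum_nonpos
      intro j hj
      have : g j ≤ ε := not_lt.mp (Finset.mem_filter.mp hj).2
      exact mul_nonpos_of_nonpos_of_nonneg (by linarith) (hcnn j)
    linarith
  have hgce : ∑ j : Fin d, g j * c j = ∑ j : Fin d, (g j - ε) * c j + ε * ∑ j : Fin d, c j := by
    rw [Finset.mul_sum, ← Finset.sum_add_distrib]
    exact Finset.sum_congr rfl (fun j _ => by ring)
  have hexp : ∑ j : Fin d, μ j * c j = μ k * (∑ j : Fin d, c j) - ∑ j : Fin d, g j * c j := by
    rw [Finset.mul_sum, ← Finset.sum_sub_distrib]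
    exact Finset.sum_congr rfl (fun j _ => by simp only [hg]; ring)
  rw [hform, hexp, hgce, htotal, mul_one]
  linarith
end

section
/- Let λ, λ̃ ∈ ℝ^p and λ∞ ∈ ℝ^d with p ≤ d. Suppose λ̃_k ≥ λ∞_k − 2ε for all k ≤ p (where λ∞ is sorted decreasingly and nonnegative), and Σ_{k=1}^p λ̃_k² ≤ Σ_{k=1}^d (λ∞_k)². Then Σ_{k=1}^p (λ∞_k − λ̃_k)² ≤ Σ_{k=p+1}^d (λ∞_k)² + 4ε Σ_{k=1}^p λ∞_k. -/
/-- If `λ∞₁ ≥ … ≥ λ∞_d ≥ 0`, `λ̃_k ≥ λ∞_k − 2ε` for `k < p ≤ d`, and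
`Σ_{k<p} λ̃_k² ≤ Σ_{k<d} λ∞_k²`, then
`Σ_{k<p} (λ∞_k − λ̃_k)² ≤ Σ_{p≤k<d} λ∞_k² + 4ε Σ_{k<p} λ∞_k`. -/
theorem stmt_8 {d p : ℕ} (hpd : p ≤ d) (laminf lamtil : ℕ → ℝ) (ε : ℝ) (hε : 0 < ε)
    (hmono : ∀ k, k + 1 < d → laminf (k + 1) ≤ laminf k)
    (hnonneg : ∀ k < d, 0 ≤ laminf k)
    (hclose : ∀ k < p, laminf k - 2 * ε ≤ lamtil k)
    (hsum : ∑ k ∈ Finset.range p, (lamtil k) ^ 2 ≤ ∑ k ∈ Finset.range d, (laminf k) ^ 2) :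
    ∑ k ∈ Finset.range p, (laminf k - lamtil k) ^ 2 ≤
      (∑ k ∈ Finset.Ico p d, (laminf k) ^ 2) + 4 * ε * ∑ k ∈ Finset.range p, laminf k := by
  have hsplit : ∑ k ∈ Finset.range d, (laminf k) ^ 2
      = ∑ k ∈ Finset.range p, (laminf k) ^ 2 + ∑ k ∈ Finset.Ico p d, (laminf k) ^ 2 := by
    rw [Finset.range_eq_Ico, ← Finset.sum_Ico_consecutive _ (Nat.zero_le p) hpd, Finset.range_eq_Ico]
  have key : ∀ k ∈ Finset.range p,
      laminf k * (laminf k - lamtil k) ≤ laminf k * (2 * ε) := by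
    intro k hk
    have hk' := Finset.mem_range.mp hk
    have h1 := hclose k hk'
    have h2 := hnonneg k (lt_of_lt_of_le hk' hpd)
    nlinarith
  have hsum2 : ∑ k ∈ Finset.range p, laminf k * (laminf k - lamtil k)
      ≤ ε * 2 * ∑ k ∈ Finset.range p, laminf k := by
    calc ∑ k ∈ Finset.range p, laminf k * (laminf k - lamtil k)
        ≤ ∑ k ∈ Finset.range p, laminf k * (2 * ε) := Finset.sum_le_sum key
      _ = ε * 2 * ∑ k ∈ Finset.range p, laminf k := by
          rw [← Finset.sum_mul]; ring
  have hid : ∑ k ∈ Finset.range p, (laminf k - lamtil k) ^ 2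
      = 2 * ∑ k ∈ Finset.range p, laminf k * (laminf k - lamtil k)
        - ∑ k ∈ Finset.range p, (laminf k) ^ 2
        + ∑ k ∈ Finset.range p, (lamtil k) ^ 2 := by
    rw [Finset.mul_sum, ← Finset.sum_sub_distrib, ← Finset.sum_add_distrib]
    exact Finset.sum_congr rfl fun k _ => by ring
  linarith
end

section
/- Define f(z) = z − log z − 1 for z > 0. For every z₀ ∈ (0,1] and every z ≥ z₀, f(z) ≤ max{1, log(1/z₀)} · (z − 1)². -/
open Real Set

private lemma g_deriv {x : ℝ} (hx : 0 < x) :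
    HasDerivAt (fun x : ℝ => Real.log x + x ^ 2 - 3 * x + 2)
      (x⁻¹ + 2 * x - 3) x := by
  have h1 := Real.hasDerivAt_log hx.ne'
  have h2 : HasDerivAt (fun x : ℝ => x ^ 2) (2 * x) x := by
    simpa using hasDerivAt_pow 2 x
  have h3 : HasDerivAt (fun x : ℝ => 3 * x) 3 x := by
    simpa using (hasDerivAt_id x).const_mul (3 : ℝ)
  simpa using (((h1.add h2).sub h3).add_const 2)

private lemma psi_deriv {x : ℝ} (hx : 0 < x) :
    HasDerivAt (fun x : ℝ => 1 - x + x * (2 - x) * Real.log x)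
      (-1 + ((2 - 2 * x) * Real.log x + (2 - x))) x := by
  have hlog := Real.hasDerivAt_log hx.ne'
  have hpoly : HasDerivAt (fun x : ℝ => x * (2 - x)) (2 - 2 * x) x := by
    have := (hasDerivAt_id x).mul ((hasDerivAt_const x (2:ℝ)).sub (hasDerivAt_id x))
    refine this.congr_deriv ?_; simp [id]; ring
  have hmul : HasDerivAt (fun x : ℝ => x * (2 - x) * Real.log x)
      ((2 - 2 * x) * Real.log x + x * (2 - x) * x⁻¹) x := hpoly.mul hlog
  have h1 : HasDerivAt (fun x : ℝ => 1 - x) (-1) x := by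
    simpa using (hasDerivAt_id' x).const_sub (1:ℝ)
  have := h1.add hmul
  refine this.congr_deriv ?_
  field_simp

/-- On `[1/2, 1]`, `g x = log x + x² - 3x + 2 ≥ 0`. -/
private lemma K1 {z : ℝ} (h1 : (1:ℝ)/2 ≤ z) (h2 : z ≤ 1) :
    0 ≤ Real.log z + z ^ 2 - 3 * z + 2 := by
  have hanti : AntitoneOn (fun x : ℝ => Real.log x + x ^ 2 - 3 * x + 2) (Icc (1/2) 1) := by
    apply antitoneOn_of_hasDerivWithinAt_nonpos (f' := fun x => x⁻¹ + 2 * x - 3)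
      (convex_Icc _ _)
    · intro x hx
      have hx0 : (0:ℝ) < x := lt_of_lt_of_le (by norm_num) hx.1
      exact ((Real.continuousAt_log hx0.ne').continuousWithinAt.add
        (continuous_pow 2).continuousWithinAt).sub
        ((continuous_const.mul continuous_id).continuousWithinAt) |>.add
        continuous_const.continuousWithinAt
    · intro x hx
      rw [interior_Icc] at hx
      have hx0 : (0:ℝ) < x := lt_trans (by norm_num) hx.1
      exact (g_deriv hx0).hasDerivWithinAt
    · intro x hx
      rw [interior_Icc] at hx
      have hx0 : (0:ℝ) < x := lt_trans (by norm_num) hx.1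
      have h : x⁻¹ + 2 * x - 3 = (2 * x - 1) * (x - 1) / x := by field_simp; ring
      rw [h]
      apply div_nonpos_of_nonpos_of_nonneg _ hx0.le
      nlinarith [hx.1, hx.2]
  have := hanti (mem_Icc.2 ⟨h1, h2⟩) (mem_Icc.2 ⟨by norm_num, le_refl 1⟩) h2
  simp only [Real.log_one] at this
  linarith

/-- On `[exp (-1), 1/2]`, `g x = log x + x² - 3x + 2 ≥ 0`. -/
private lemma K2 {z : ℝ} (h1 : Real.exp (-1) ≤ z) (h2 : z ≤ 1/2) :
    0 ≤ Real.log z + z ^ 2 - 3 * z + 2 := by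
  have he : (0:ℝ) < Real.exp (-1) := Real.exp_pos _
  have hmono : MonotoneOn (fun x : ℝ => Real.log x + x ^ 2 - 3 * x + 2)
      (Icc (Real.exp (-1)) (1/2)) := by
    apply monotoneOn_of_hasDerivWithinAt_nonneg (f' := fun x => x⁻¹ + 2 * x - 3)
      (convex_Icc _ _)
    · intro x hx
      have hx0 : (0:ℝ) < x := lt_of_lt_of_le he hx.1
      exact ((Real.continuousAt_log hx0.ne').continuousWithinAt.add
        (continuous_pow 2).continuousWithinAt).sub
        ((continuous_const.mul continuous_id).continuousWithinAt) |>.add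
        continuous_const.continuousWithinAt
    · intro x hx
      rw [interior_Icc] at hx
      have hx0 : (0:ℝ) < x := lt_trans he hx.1
      exact (g_deriv hx0).hasDerivWithinAt
    · intro x hx
      rw [interior_Icc] at hx
      have hx0 : (0:ℝ) < x := lt_trans he hx.1
      have h : x⁻¹ + 2 * x - 3 = (2 * x - 1) * (x - 1) / x := by field_simp; ring
      rw [h]
      apply div_nonneg _ hx0.le
      nlinarith [hx.2]
  have := hmono (mem_Icc.2 ⟨le_refl _, le_trans h1 h2⟩) (mem_Icc.2 ⟨h1, h2⟩) h1
  simp only [Real.log_exp] at this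
  -- numeric: exp(-1)^2 - 3 exp(-1) + 1 ≥ 0
  have hb : Real.exp (-1) < 0.368 := by
    rw [Real.exp_neg]
    rw [inv_lt_comm₀ (Real.exp_pos 1) (by norm_num)]
    calc (0.368:ℝ)⁻¹ < 2.7182818283 := by norm_num
    _ < Real.exp 1 := Real.exp_one_gt_d9
  nlinarith [he, hb, this]

/-- On `(0, exp (-1)]`, `1 - z + z(2-z) log z ≥ 0`. -/
private lemma K3 {z : ℝ} (h0 : 0 < z) (h1 : z ≤ Real.exp (-1)) :
    0 ≤ 1 - z + z * (2 - z) * Real.log z := by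
  have he : (0:ℝ) < Real.exp (-1) := Real.exp_pos _
  have hanti : AntitoneOn (fun x : ℝ => 1 - x + x * (2 - x) * Real.log x)
      (Icc z (Real.exp (-1))) := by
    apply antitoneOn_of_hasDerivWithinAt_nonpos
      (f' := fun x => -1 + ((2 - 2 * x) * Real.log x + (2 - x))) (convex_Icc _ _)
    · intro x hx
      have hx0 : (0:ℝ) < x := lt_of_lt_of_le h0 hx.1
      exact (continuous_const.sub continuous_id).continuousWithinAt.add
        (((continuous_id.mul (continuous_const.sub continuous_id)).continuousWithinAt).mul
          (Real.continuousAt_log hx0.ne').continuousWithinAt)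
    · intro x hx
      rw [interior_Icc] at hx
      exact (psi_deriv (lt_trans h0 hx.1)).hasDerivWithinAt
    · intro x hx
      rw [interior_Icc] at hx
      have hx0 : (0:ℝ) < x := lt_trans h0 hx.1
      have hlog : Real.log x < -1 := by
        have := Real.log_lt_log hx0 hx.2
        rwa [Real.log_exp] at this
      have hxe : x < 1 := lt_trans hx.2 (by
        calc Real.exp (-1) < 1 := Real.exp_lt_one_iff.mpr (by norm_num)
        )
      have hfac : -1 + ((2 - 2 * x) * Real.log x + (2 - x)) = (1 - x) * (1 + 2 * Real.log x) := by
        ring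
      rw [hfac]
      apply mul_nonpos_of_nonneg_of_nonpos (by linarith) (by linarith)
  have := hanti (mem_Icc.2 ⟨le_refl _, h1⟩) (mem_Icc.2 ⟨h1, le_refl _⟩) h1
  have hval : Real.log (Real.exp (-1)) = -1 := Real.log_exp _
  simp only [hval] at this
  have hb : Real.exp (-1) < 0.368 := by
    rw [Real.exp_neg]
    rw [inv_lt_comm₀ (Real.exp_pos 1) (by norm_num)]
    calc (0.368:ℝ)⁻¹ < 2.7182818283 := by norm_num
    _ < Real.exp 1 := Real.exp_one_gt_d9
  nlinarith [he, hb, this]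

/-- Pointwise version on `(0,1]`. -/
private lemma pointwise {z : ℝ} (h0 : 0 < z) (h1 : z ≤ 1) :
    z - Real.log z - 1 ≤ max 1 (Real.log (1 / z)) * (z - 1) ^ 2 := by
  rcases le_or_gt z (Real.exp (-1)) with hc | hc
  · -- small z : use C ≥ log(1/z)
    have hK := K3 h0 hc
    have hle : -Real.log z ≤ max 1 (Real.log (1 / z)) := by
      rw [one_div, Real.log_inv]
      exact le_max_right _ _
    have hsq : (0:ℝ) ≤ (z - 1) ^ 2 := sq_nonneg _
    have step : z - Real.log z - 1 ≤ (-Real.log z) * (z - 1) ^ 2 := by nlinarith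
    calc z - Real.log z - 1 ≤ (-Real.log z) * (z - 1) ^ 2 := step
      _ ≤ max 1 (Real.log (1 / z)) * (z - 1) ^ 2 := mul_le_mul_of_nonneg_right hle hsq
  · -- exp(-1) < z ≤ 1 : f ≤ (z-1)²
    have hg : 0 ≤ Real.log z + z ^ 2 - 3 * z + 2 := by
      rcases le_or_gt z (1/2) with hd | hd
      · exact K2 hc.le hd
      · exact K1 hd.le h1
    have hone : (1:ℝ) ≤ max 1 (Real.log (1 / z)) := le_max_left _ _
    have hsq : (0:ℝ) ≤ (z - 1) ^ 2 := sq_nonneg _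
    nlinarith [mul_le_mul_of_nonneg_right hone hsq]

/-- For `f(z) = z − log z − 1`, every `z₀ ∈ (0,1]` and every `z ≥ z₀`,
`f(z) ≤ max {1, log(1/z₀)} (z − 1)²`. -/
theorem stmt_10 (z₀ z : ℝ) (hz₀ : 0 < z₀) (hz₀1 : z₀ ≤ 1) (hz : z₀ ≤ z) :
    z - Real.log z - 1 ≤ max 1 (Real.log (1 / z₀)) * (z - 1) ^ 2 := by
  have hz0 : 0 < z := lt_of_lt_of_le hz₀ hz
  have hC1 : (1:ℝ) ≤ max 1 (Real.log (1 / z₀)) := le_max_left _ _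
  have hsq : (0:ℝ) ≤ (z - 1) ^ 2 := sq_nonneg _
  rcases le_or_gt z 1 with h1 | h1
  · -- z ≤ 1 : use pointwise with monotone max
    have hmax : max 1 (Real.log (1 / z)) ≤ max 1 (Real.log (1 / z₀)) := by
      apply max_le (le_max_left _ _)
      refine le_trans ?_ (le_max_right _ _)
      apply Real.log_le_log (by positivity)
      exact one_div_le_one_div_of_le hz₀ hz
    calc z - Real.log z - 1 ≤ max 1 (Real.log (1 / z)) * (z - 1) ^ 2 := pointwise hz0 h1
      _ ≤ max 1 (Real.log (1 / z₀)) * (z - 1) ^ 2 := mul_le_mul_of_nonneg_right hmax hsq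
  · -- z > 1 : -log z ≤ 1/z - 1, so f ≤ (z-1)²/z ≤ (z-1)²
    have hlog : Real.log (1 / z) ≤ 1 / z - 1 := Real.log_le_sub_one_of_pos (by positivity)
    rw [Real.log_div (one_ne_zero (α := ℝ)) hz0.ne', Real.log_one] at hlog
    have step : z - Real.log z - 1 ≤ (z - 1) ^ 2 := by
      have h2 : z - Real.log z - 1 ≤ z + 1 / z - 2 := by linarith
      have heq : z + 1 / z - 2 = (z - 1) ^ 2 / z := by field_simp; ring
      have h3 : (z - 1) ^ 2 / z ≤ (z - 1) ^ 2 := div_le_self hsq h1.le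
      linarith [heq ▸ h2]
    calc z - Real.log z - 1 ≤ (z - 1) ^ 2 := step
      _ = 1 * (z - 1) ^ 2 := (one_mul _).symm
      _ ≤ max 1 (Real.log (1 / z₀)) * (z - 1) ^ 2 := mul_le_mul_of_nonneg_right hC1 hsq
end

section
/- Let T be a symmetric positive definite d×d matrix with all eigenvalues at least z₀ for some z₀ ∈ (0,1]. Then tr(T) − d − log det(T) ≤ max{1, log(1/z₀)} · ‖T − I‖_F². -/
open Matrix

-- scalar helper: exp(s - 1/s) ≥ s² for s ≥ 1
lemma expsq {s : ℝ} (hs : 1 ≤ s) : s^2 ≤ Real.exp (s - 1/s) := by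
  have hs0 : 0 < s := lt_of_lt_of_le one_pos hs
  have hy : 0 ≤ s - 1/s := by
    have : 1/s ≤ 1 := by rw [div_le_one hs0]; exact hs
    linarith
  have hsum := Real.sum_le_exp_of_nonneg hy 4
  have hexp : 1 + (s - 1/s) + (s - 1/s)^2/2 + (s - 1/s)^3/6 ≤ Real.exp (s - 1/s) := by
    refine le_trans (le_of_eq ?_) hsum
    rw [Finset.sum_range_succ, Finset.sum_range_succ, Finset.sum_range_succ,
      Finset.sum_range_one]
    norm_num [Nat.factorial]
  refine le_trans ?_ hexp
  have key : 6 * s^3 * ((1 + (s - 1/s) + (s - 1/s)^2/2 + (s - 1/s)^3/6) - s^2)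
      = (s-1)^3*(s^3+1) := by
    field_simp
    ring
  nlinarith [pow_pos hs0 3, mul_nonneg (pow_nonneg (by linarith : (0:ℝ) ≤ s-1) 3) (by positivity : (0:ℝ) ≤ s^3+1)]

-- log(1/z) ≤ (1-z)/√z  for 0 < z ≤ 1
lemma logbound {z : ℝ} (hz : 0 < z) (hz1 : z ≤ 1) :
    Real.log (1/z) ≤ (1 - z)/Real.sqrt z := by
  set s := Real.sqrt z with hsdef
  have hs0 : 0 < s := Real.sqrt_pos.mpr hz
  have hs2 : s^2 = z := Real.sq_sqrt hz.le
  have hs1 : s ≤ 1 := by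
    rw [show (1:ℝ) = Real.sqrt 1 by simp]; exact Real.sqrt_le_sqrt hz1
  have h1s : 1 ≤ 1/s := (le_div_iff₀ hs0).mpr (by linarith)
  have := expsq h1s
  have h2 : (1/s)^2 = 1/z := by rw [div_pow, one_pow, hs2]
  rw [h2] at this
  have h3 : 1/s - 1/(1/s) = (1-z)/s := by
    rw [one_div_one_div]
    field_simp
    rw [← hs2]
  rw [h3] at this
  calc Real.log (1/z) ≤ Real.log (Real.exp ((1-z)/s)) := by
        apply Real.log_le_log (by positivity) this
    _ = (1-z)/s := Real.log_exp _

set_option maxHeartbeats 1000000 in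
lemma key_scalar {z z₀ : ℝ} (hz₀ : 0 < z₀) (hz₀1 : z₀ ≤ 1) (hz : z₀ ≤ z) :
    z - 1 - Real.log z ≤ max 1 (Real.log (1/z₀)) * (z-1)^2 := by
  set M := max 1 (Real.log (1/z₀)) with hMdef
  have hM1 : (1:ℝ) ≤ M := le_max_left _ _
  have hz0 : 0 < z := lt_of_lt_of_le hz₀ hz
  rcases le_or_gt 1 z with h1 | h1
  · have hlog : Real.log (1/z) ≤ 1/z - 1 := Real.log_le_sub_one_of_pos (by positivity)
    rw [Real.log_div one_ne_zero (ne_of_gt hz0), Real.log_one] at hlog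
    have h2 : 1 - 1/z ≤ Real.log z := by linarith
    have h3 : z * (1/z) = 1 := mul_one_div_cancel (ne_of_gt hz0)
    nlinarith [sq_nonneg (z-1), mul_nonneg (sq_nonneg (z-1)) (by linarith : (0:ℝ) ≤ M - 1)]
  · set t := 1 - z with htdef
    set s := Real.sqrt z with hsdef
    have hs0 : 0 < s := Real.sqrt_pos.mpr hz0
    have hs2 : s^2 = z := Real.sq_sqrt hz0.le
    have ht : 0 < t := by linarith
    have ht1 : t < 1 := by linarith
    have ht2 : 0 < 1 - t^2 := by nlinarith
    have hu : Real.log (1/z) ≤ t/s := by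
      have := logbound hz0 h1.le
      simpa using this
    have hulog : Real.log (1/z) = - Real.log z := by
      rw [Real.log_div one_ne_zero (ne_of_gt hz0), Real.log_one]; ring
    have goal2 : Real.log (1/z) ≤ t + M * t^2 → z - 1 - Real.log z ≤ M * (z-1)^2 := by
      intro h
      have hsq : (z-1)^2 = t^2 := by rw [htdef]; ring
      rw [hsq, hulog] at *
      linarith
    apply goal2
    have hxsq : (s*(1+t))^2 = (1-t)*(1+t)^2 := by
      rw [mul_pow, hs2, htdef]; ring
    rcases le_or_gt z (t^2) with hcase | hcase
    · have htt : 1 ≤ t + t^2 := by nlinarith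
      rcases le_or_gt (Real.log (1/z)) 1 with hu1 | hu1
      · nlinarith [mul_nonneg (by linarith : (0:ℝ) ≤ M - 1) (sq_nonneg t)]
      · have hMu : Real.log (1/z) ≤ M := by
          refine le_trans ?_ (le_max_right _ _)
          exact Real.log_le_log (by positivity) (one_div_le_one_div_of_le hz₀ hz)
        have hx2 : (s*(1+t))^2 ≤ 1 := by
          rw [hxsq]; nlinarith [mul_nonneg ht.le (by linarith : (0:ℝ) ≤ t + t^2 - 1)]
        have hst : s * (1+t) ≤ 1 := by nlinarith [mul_pos hs0 (by linarith : (0:ℝ) < 1 + t)]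
        have h7 : t/s * (1 - t^2) = t * (s * (1+t)) := by
          have he : (1:ℝ) - t^2 = s^2 * (1+t) := by rw [hs2, htdef]; ring
          rw [he]; field_simp
        have h5 : Real.log (1/z) * (1 - t^2) ≤ t := by
          have h6 : Real.log (1/z) * (1 - t^2) ≤ t/s * (1 - t^2) :=
            mul_le_mul_of_nonneg_right hu ht2.le
          rw [h7] at h6
          have h6b := mul_le_mul_of_nonneg_left hst ht.le
          rw [mul_one] at h6b
          exact le_trans h6 h6b
        have h10 : Real.log (1/z) * t^2 ≤ M * t^2 :=
          mul_le_mul_of_nonneg_right hMu (sq_nonneg t)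
        nlinarith
    · have hx2 : (1:ℝ) ≤ (s*(1+t))^2 := by
        rw [hxsq]; nlinarith [mul_nonneg ht.le (by nlinarith : (0:ℝ) ≤ 1 - t - t^2)]
      have h8 : 1 ≤ s * (1+t) := by nlinarith [mul_pos hs0 (by linarith : (0:ℝ) < 1 + t)]
      have h9 : t/s ≤ t + t^2 := by
        rw [div_le_iff₀ hs0]
        have := mul_le_mul_of_nonneg_left h8 ht.le
        nlinarith
      nlinarith [mul_nonneg (by linarith : (0:ℝ) ≤ M - 1) (sq_nonneg t)]

/-- For a symmetric positive definite `T` with all eigenvalues at least `z₀ ∈ (0,1]`,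
`tr T − d − log det T ≤ max {1, log(1/z₀)} ‖T − I‖_F²`. -/
theorem stmt_16 {d : ℕ} (T : Matrix (Fin d) (Fin d) ℝ) (z₀ : ℝ)
    (hz₀ : 0 < z₀) (hz₀1 : z₀ ≤ 1) (hT : T.PosDef)
    (heig : (T - z₀ • (1 : Matrix (Fin d) (Fin d) ℝ)).PosSemidef) :
    Matrix.trace T - d - Real.log T.det ≤
      max 1 (Real.log (1 / z₀)) * Matrix.trace ((T - 1)ᵀ * (T - 1)) := by
  classical
  have hH : T.IsHermitian := hT.1
  set lam := hH.eigenvalues with hlam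
  set V : Matrix (Fin d) (Fin d) ℝ := (hH.eigenvectorUnitary : Matrix (Fin d) (Fin d) ℝ) with hV
  have hUU : star V * V = 1 := mem_unitaryGroup_iff'.mp hH.eigenvectorUnitary.2
  have hUU' : V * star V = 1 := mem_unitaryGroup_iff.mp hH.eigenvectorUnitary.2
  have hspec : T = V * diagonal lam * star V := by
    have := hH.spectral_theorem
    rwa [RCLike.ofReal_real_eq_id, Function.id_comp] at this
  -- eigenvalue lower bound
  have hbound : ∀ i, z₀ ≤ lam i := by
    intro i
    set v : (Fin d) → ℝ := ⇑(hH.eigenvectorBasis i) with hv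
    have h1 : T *ᵥ v = lam i • v := hH.mulVec_eigenvectorBasis i
    have hvv : v ⬝ᵥ v = 1 := by
      have h2 := hH.eigenvalues_eq i
      rw [h1] at h2
      simp only [star_trivial, dotProduct_smul, smul_eq_mul, RCLike.re_to_real] at h2
      have hpos : lam i ≠ 0 := ne_of_gt (hT.eigenvalues_pos i)
      field_simp at h2
      nlinarith [hT.eigenvalues_pos i]
    have h3 := heig.dotProduct_mulVec_nonneg v
    rw [sub_mulVec, smul_mulVec, one_mulVec, h1] at h3
    simp only [star_trivial, dotProduct_sub, dotProduct_smul, smul_eq_mul, hvv] at h3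
    linarith
  -- trace T
  have htr : trace T = ∑ i, lam i := by
    rw [hspec, trace_mul_cycle, hUU, one_mul, trace_diagonal]
  -- determinant
  have hdet : T.det = ∏ i, lam i := by
    have := hH.det_eq_prod_eigenvalues
    simpa using this
  -- T - 1
  have hsub : T - 1 = V * diagonal (fun i => lam i - 1) * star V := by
    have h1 : (1 : Matrix (Fin d) (Fin d) ℝ) = V * 1 * star V := by rw [mul_one, hUU']
    rw [hspec]
    nth_rewrite 1 [h1]
    rw [← sub_mul, ← mul_sub]
    congr 1
    congr 1
    rw [← diagonal_one, diagonal_sub]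
  have htrans : (T - 1)ᵀ = T - 1 := by
    rw [← conjTranspose_eq_transpose_of_trivial]
    exact (hH.sub (isHermitian_one)).eq
  have hquad : trace ((T - 1)ᵀ * (T - 1)) = ∑ i, (lam i - 1)^2 := by
    rw [htrans, hsub]
    have : V * diagonal (fun i => lam i - 1) * star V * (V * diagonal (fun i => lam i - 1) * star V)
        = V * (diagonal (fun i => lam i - 1) * diagonal (fun i => lam i - 1)) * star V := by
      rw [mul_assoc, mul_assoc, mul_assoc]
      rw [show star V * (V * (diagonal (fun i => lam i - 1) * star V)) =
        (star V * V) * (diagonal (fun i => lam i - 1) * star V) by rw [mul_assoc]]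
      rw [hUU, one_mul]
      rw [← mul_assoc, ← mul_assoc, mul_assoc V]
    rw [this, trace_mul_cycle, hUU, one_mul, diagonal_mul_diagonal, trace_diagonal]
    congr 1; funext i; ring
  -- assemble
  have hlogdet : Real.log T.det = ∑ i, Real.log (lam i) := by
    rw [hdet]
    exact Real.log_prod (fun i _ => ne_of_gt (hT.eigenvalues_pos i))
  have hd : (d : ℝ) = ∑ _i : Fin d, (1:ℝ) := by simp
  rw [htr, hlogdet, hquad, hd, Finset.mul_sum, ← Finset.sum_sub_distrib,
    ← Finset.sum_sub_distrib]
  apply Finset.sum_le_sum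
  intro i _
  exact key_scalar hz₀ hz₀1 (hbound i)
end
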